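/- arXiv:0810.3481 — 8 statements merged into one kernel-verified Lean document; each statement's English description precedes it below -/
import Mathlib

section
/- Every complex 3×3 matrix Δ can be transformed, by multiplying on the left by a unitary matrix and conjugating by a real orthogonal matrix (Δ ↦ Rᵀ(UΔ)R), into a Hermitian positive-semidefinite matrix whose real part is diagonal, i.e. a matrix of the form with real diagonal entries Δ₁, Δ₂, Δ₃ and purely imaginary off-diagonal entries given by ε_{ijk}·(i a_k) for real a₁, a₂, a₃. -/
open Matrix ComplexOrder


noncomputable section

namespace OPNF

variable {n : Type*} [Fintype n] [DecidableEq n]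

open scoped MatrixOrder

local notation "⟪" x ", " y "⟫" => @inner ℂ _ _ x y

lemma toEuclideanLin_mul (A B : Matrix n n ℂ) :
    Matrix.toEuclideanLin (A * B) =
      (Matrix.toEuclideanLin A) ∘ₗ (Matrix.toEuclideanLin B) := by
  apply LinearMap.ext; intro x
  simp [Matrix.toEuclideanLin_apply, Matrix.mulVec_mulVec]

lemma toEuclideanLin_one :
    Matrix.toEuclideanLin (1 : Matrix n n ℂ) = LinearMap.id := by
  apply LinearMap.ext; intro x
  simp [Matrix.toEuclideanLin_apply]

lemma exists_unitary_polar (Δ : Matrix n n ℂ) :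
    ∃ U ∈ Matrix.unitaryGroup n ℂ, (U * Δ).PosSemidef := by
  have hB : (Δᴴ * Δ).PosSemidef := Matrix.posSemidef_conjTranspose_mul_self Δ
  have hP : (CFC.sqrt (Δᴴ * Δ)).PosSemidef := (CFC.sqrt_nonneg _).posSemidef
  have hPP : CFC.sqrt (Δᴴ * Δ) * CFC.sqrt (Δᴴ * Δ) = Δᴴ * Δ := CFC.sqrt_mul_sqrt_self _ hB.nonneg
  set P := CFC.sqrt (Δᴴ * Δ) with hPdef
  set p := Matrix.toEuclideanLin P with hp
  set t := Matrix.toEuclideanLin Δ with ht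
  have hcomp : LinearMap.adjoint p ∘ₗ p = LinearMap.adjoint t ∘ₗ t := by
    rw [← Matrix.toEuclideanLin_conjTranspose_eq_adjoint,
      ← Matrix.toEuclideanLin_conjTranspose_eq_adjoint,
      ← toEuclideanLin_mul, ← toEuclideanLin_mul, hP.1.eq, hPP]
  have hinner : ∀ x y, ⟪p x, p y⟫ = ⟪t x, t y⟫ := by
    intro x y
    rw [← LinearMap.adjoint_inner_right p, ← LinearMap.adjoint_inner_right t,
      ← LinearMap.comp_apply, ← LinearMap.comp_apply, hcomp]
  have hnorm : ∀ x, ‖p x‖ = ‖t x‖ := by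
    intro x
    have h := hinner x x
    rw [inner_self_eq_norm_sq_to_K, inner_self_eq_norm_sq_to_K] at h
    have h2 : (‖p x‖ : ℝ) ^ 2 = ‖t x‖ ^ 2 := by exact_mod_cast h
    exact (sq_eq_sq₀ (norm_nonneg _) (norm_nonneg _)).mp h2
  have hker : LinearMap.ker p ≤ LinearMap.ker t := by
    intro x hx
    rw [LinearMap.mem_ker] at hx ⊢
    rw [← norm_eq_zero, ← hnorm, norm_eq_zero, hx]
  let e := LinearMap.quotKerEquivRange p
  let t' := (LinearMap.ker p).liftQ t hker
  let f : LinearMap.range p →ₗ[ℂ] EuclideanSpace ℂ n :=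
    t' ∘ₗ (e.symm : LinearMap.range p →ₗ[ℂ] _)
  have hf : ∀ x, f ⟨p x, LinearMap.mem_range_self p x⟩ = t x := by
    intro x
    have he : e (Submodule.Quotient.mk x) = ⟨p x, LinearMap.mem_range_self p x⟩ :=
      Subtype.ext (LinearMap.quotKerEquivRange_apply_mk p x)
    have he' : e.symm ⟨p x, LinearMap.mem_range_self p x⟩ = Submodule.Quotient.mk x := by
      rw [← he, LinearEquiv.symm_apply_apply]
    show t' (e.symm ⟨p x, LinearMap.mem_range_self p x⟩) = t x
    rw [he']
    exact Submodule.liftQ_apply _ t x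
  have hfnorm : ∀ s : LinearMap.range p, ‖f s‖ = ‖s‖ := by
    rintro ⟨-, x, rfl⟩
    have h1 : f ⟨p x, LinearMap.mem_range_self p x⟩ = t x := hf x
    rw [h1, ← hnorm]
    rfl
  let L : LinearMap.range p →ₗᵢ[ℂ] EuclideanSpace ℂ n := ⟨f, hfnorm⟩
  let W := L.extend
  have hWp : ∀ x, W (p x) = t x := by
    intro x
    have : W ((⟨p x, LinearMap.mem_range_self p x⟩ : LinearMap.range p) :
        EuclideanSpace ℂ n) = L ⟨p x, LinearMap.mem_range_self p x⟩ :=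
      L.extend_apply _
    rw [show p x = ((⟨p x, LinearMap.mem_range_self p x⟩ : LinearMap.range p) :
        EuclideanSpace ℂ n) from rfl, this]
    exact hf x
  set Wm := Matrix.toEuclideanLin.symm W.toLinearMap with hWmdef
  have hWlin : Matrix.toEuclideanLin Wm = W.toLinearMap :=
    Matrix.toEuclideanLin.apply_symm_apply _
  have hunit : Wmᴴ * Wm = 1 := by
    apply Matrix.toEuclideanLin.injective
    rw [toEuclideanLin_mul, toEuclideanLin_one,
      Matrix.toEuclideanLin_conjTranspose_eq_adjoint, hWlin]
    apply LinearMap.ext; intro x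
    apply ext_inner_right ℂ
    intro y
    simp only [LinearMap.comp_apply, LinearMap.id_apply]
    rw [LinearMap.adjoint_inner_left]
    exact W.inner_map_map x y
  have hfact : Wm * P = Δ := by
    apply Matrix.toEuclideanLin.injective
    rw [toEuclideanLin_mul, hWlin]
    apply LinearMap.ext; intro x
    exact hWp x
  refine ⟨Wmᴴ, ?_, ?_⟩
  · rw [Matrix.mem_unitaryGroup_iff', Matrix.star_eq_conjTranspose,
      Matrix.conjTranspose_conjTranspose]
    exact mul_eq_one_comm.mp hunit
  · have hUD : Wmᴴ * Δ = P := by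
      rw [← hfact, ← mul_assoc, hunit, one_mul]
    rw [hUD]
    exact hP

end OPNF


end

open OPNF in
/-- Every complex 3×3 matrix can be brought, by a left unitary transformation and
conjugation by a real special orthogonal matrix, to a Hermitian positive-semidefinite
matrix whose real (symmetric) part is diagonal. -/
theorem order_parameter_normal_form (Δ : Matrix (Fin 3) (Fin 3) ℂ) :
    ∃ (U : Matrix (Fin 3) (Fin 3) ℂ) (R : Matrix (Fin 3) (Fin 3) ℝ),
      U ∈ Matrix.unitaryGroup (Fin 3) ℂ ∧
      R ∈ Matrix.orthogonalGroup (Fin 3) ℝ ∧ R.det = 1 ∧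
      ((R.map Complex.ofReal)ᵀ * (U * Δ) * R.map Complex.ofReal).PosSemidef ∧
      (∀ i j : Fin 3, i ≠ j →
        (((R.map Complex.ofReal)ᵀ * (U * Δ) * R.map Complex.ofReal) i j).re = 0) := by
  obtain ⟨U, hU, hM⟩ := exists_unitary_polar Δ
  set M := U * Δ with hMdef
  set S : Matrix (Fin 3) (Fin 3) ℝ := M.map Complex.re with hSdef
  have hS : S.IsHermitian := by
    ext i j
    have h := congrFun (congrFun hM.1 i) j
    simp only [Matrix.conjTranspose_apply] at h
    simp only [Matrix.conjTranspose_apply, Matrix.map_apply, star_trivial, hSdef]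
    rw [← h, Complex.star_def, Complex.conj_re]
  set V' : Matrix (Fin 3) (Fin 3) ℝ := (hS.eigenvectorUnitary : Matrix (Fin 3) (Fin 3) ℝ) with hV'def
  have hV'mem : V' ∈ Matrix.unitaryGroup (Fin 3) ℝ := hS.eigenvectorUnitary.2
  have hV'1 : star V' * V' = 1 := (Matrix.mem_unitaryGroup_iff').mp hV'mem
  have hV'2 : V' * star V' = 1 := (Matrix.mem_unitaryGroup_iff).mp hV'mem
  have hstarV' : star V' = V'ᵀ := by
    ext i j; simp [Matrix.star_eq_conjTranspose, Matrix.conjTranspose_apply]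
  have hdet2 : V'.det * V'.det = 1 := by
    have := congrArg Matrix.det hV'1
    rwa [Matrix.det_mul, hstarV', Matrix.det_transpose, Matrix.det_one] at this
  set E : Matrix (Fin 3) (Fin 3) ℝ :=
    Matrix.diagonal (fun i => if i = 0 then V'.det else 1) with hEdef
  have hE2 : E * E = 1 := by
    rw [hEdef, Matrix.diagonal_mul_diagonal]
    ext i j
    rcases eq_or_ne i j with rfl | h
    · by_cases h0 : i = 0 <;> simp [h0, hdet2, Matrix.one_apply]
    · simp [Matrix.diagonal_apply_ne _ h, Matrix.one_apply_ne h]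
  have hEsymm : Eᵀ = E := Matrix.diagonal_transpose _
  set R := V' * E with hRdef
  have hstarE : star E = E := by
    simp [hEdef, Matrix.star_eq_conjTranspose, Matrix.diagonal_conjTranspose]
  have hRmem : R ∈ Matrix.orthogonalGroup (Fin 3) ℝ := by
    rw [Matrix.mem_orthogonalGroup_iff']
    rw [hRdef, Matrix.transpose_mul, hEsymm, ← hstarV', mul_assoc, ← mul_assoc (star V') V' E, hV'1, one_mul, hE2]
  have hRdet : R.det = 1 := by
    rw [hRdef, Matrix.det_mul, hEdef, Matrix.det_diagonal, Fin.prod_univ_three]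
    simp [hdet2]
  -- transpose conjugation of S is diagonal
  set D : Matrix (Fin 3) (Fin 3) ℝ :=
    Matrix.diagonal (RCLike.ofReal ∘ hS.eigenvalues) with hDdef
  have hdiag : star V' * S * V' = D := by
    have := hS.conjStarAlgAut_star_eigenvectorUnitary
    rw [hV'def, hDdef]
    simpa [Unitary.conjStarAlgAut_apply] using this
  have hRSR : Rᵀ * S * R = E * D * E := by
    have hRT : Rᵀ = E * star V' := by
      rw [hRdef, Matrix.transpose_mul, hEsymm, ← hstarV']
    rw [hRT, hRdef, ← hdiag]
    simp only [Matrix.mul_assoc]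
  have hRSRdiag : ∀ i j : Fin 3, i ≠ j → (Rᵀ * S * R) i j = 0 := by
    intro i j hij
    rw [hRSR, hEdef, hDdef, Matrix.diagonal_mul_diagonal, Matrix.diagonal_mul_diagonal,
      Matrix.diagonal_apply_ne _ hij]
  -- key re-entry computation
  have hre : ∀ i j : Fin 3,
      (((R.map Complex.ofReal)ᵀ * M * R.map Complex.ofReal) i j).re
        = (Rᵀ * S * R) i j := by
    intro i j
    simp only [Matrix.mul_apply, Matrix.transpose_apply, Matrix.map_apply, hSdef,
      Fin.sum_univ_three]
    simp [Complex.add_re, Complex.mul_re]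
  refine ⟨U, R, hU, hRmem, hRdet, ?_, ?_⟩
  · have hCT : (R.map Complex.ofReal)ᵀ = (R.map Complex.ofReal)ᴴ := by
      ext i j
      simp [Matrix.conjTranspose_apply, Matrix.transpose_apply, Matrix.map_apply,
        Complex.star_def, Complex.conj_ofReal]
    rw [← hMdef, hCT]
    exact hM.conjTranspose_mul_mul_same _
  · intro i j hij
    rw [← hMdef, hre i j, hRSRdiag i j hij]
end

section
/- Let Δ be a 3×3 Hermitian positive-semidefinite matrix, U ∈ U(3), and R ∈ SO(3). If U Rᵀ Δ R = Δ, then U Δ = Δ and Rᵀ Δ R = Δ. -/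
open Matrix ComplexOrder

/-- If `Δ` is Hermitian positive semidefinite, `U` is unitary, `R ∈ SO(3)`, and
`U Rᵀ Δ R = Δ`, then `U Δ = Δ` and `Rᵀ Δ R = Δ`. -/
theorem separate_invariance (Δ : Matrix (Fin 3) (Fin 3) ℂ)
    (U : Matrix (Fin 3) (Fin 3) ℂ) (R : Matrix (Fin 3) (Fin 3) ℝ)
    (hΔ : Δ.PosSemidef)
    (hU : U ∈ Matrix.unitaryGroup (Fin 3) ℂ)
    (hR : R ∈ Matrix.orthogonalGroup (Fin 3) ℝ) (hRdet : R.det = 1)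
    (h : U * ((R.map Complex.ofReal)ᵀ * Δ * R.map Complex.ofReal) = Δ) :
    U * Δ = Δ ∧ (R.map Complex.ofReal)ᵀ * Δ * R.map Complex.ofReal = Δ := by
  set C : Matrix (Fin 3) (Fin 3) ℂ := R.map Complex.ofReal with hC
  have hCt : Cᴴ = Cᵀ := by
    ext i j
    simp [hC, conjTranspose_apply, Complex.conj_ofReal]
  set P : Matrix (Fin 3) (Fin 3) ℂ := Cᵀ * Δ * C with hP
  have hPsd : P.PosSemidef := by
    have := hΔ.conjTranspose_mul_mul_same C
    rwa [hCt] at this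
  have hUU : star U * U = 1 := hU.1
  have hUU' : U * star U = 1 := hU.2
  have hPeq : P = star U * Δ := by
    calc P = (star U * U) * P := by rw [hUU, one_mul]
    _ = star U * (U * P) := by rw [mul_assoc]
    _ = star U * Δ := by rw [h]
  have hsq : P ^ 2 = Δ ^ 2 := by
    have : Pᴴ * P = Δᴴ * Δ := by
      have hone : (star U)ᴴ * star U = 1 := by
        simpa [star_eq_conjTranspose] using hUU'
      rw [hPeq, conjTranspose_mul, mul_assoc, ← mul_assoc (star U)ᴴ, hone, one_mul]
    have h1 : Pᴴ = P := hPsd.1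
    have h2 : Δᴴ = Δ := hΔ.1
    rw [h1, h2] at this
    simpa [pow_two] using this
  have hPΔ : P = Δ := by
    open scoped MatrixOrder Matrix.Norms.L2Operator in
    exact (CFC.sq_eq_sq_iff P Δ hPsd.nonneg hΔ.nonneg).1 hsq
  refine ⟨?_, hPΔ⟩
  rw [← hPΔ] at h ⊢
  exact h
end

section
/- For a complex 3×3 matrix Δ with B = tr((ΔΔ†)²) and C = tr(ΔΔᵀ(ΔΔᵀ)†), the equality C = B holds if and only if the matrix Z = Δ†Δ is real, i.e. Z = Z* (complex conjugate entrywise). -/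
open Matrix

/-- `C = B` holds if and only if `Z = Δ†Δ` is (entrywise) real, i.e. `Z = Z*`. -/
theorem invariant_equality_real (Δ : Matrix (Fin 3) (Fin 3) ℂ)
    (B C : ℝ)
    (hB : B = ((Δ * Δᴴ * (Δ * Δᴴ)).trace).re)
    (hC : C = ((Δ * Δᵀ * (Δ * Δᵀ)ᴴ).trace).re) :
    C = B ↔ ∀ i j : Fin 3, star ((Δᴴ * Δ) i j) = (Δᴴ * Δ) i j := by
  set Z := Δᴴ * Δ with hZdef
  have hherm : Zᴴ = Z := by
    simp [hZdef, Matrix.conjTranspose_mul, mul_assoc]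
  have hZsym : ∀ i j, Z j i = star (Z i j) := by
    intro i j
    conv_lhs => rw [← hherm]
    simp [Matrix.conjTranspose_apply]
  have hBtr : (Δ * Δᴴ * (Δ * Δᴴ)).trace = (Z * Z).trace := by
    rw [hZdef, mul_assoc, trace_mul_comm]
    simp only [mul_assoc]
  have hmap : Δᵀ * (Δᵀ)ᴴ = Z.map star := by
    ext i j
    simp [hZdef, Matrix.mul_apply, Matrix.map_apply, Matrix.conjTranspose_apply,
      Matrix.transpose_apply, Finset.sum_comm, mul_comm]
  have hCtr : (Δ * Δᵀ * (Δ * Δᵀ)ᴴ).trace = (Z * Z.map star).trace := by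
    rw [conjTranspose_mul, ← mul_assoc, trace_mul_comm, ← hmap, hZdef]
    simp only [mul_assoc]
  have hB' : B = ∑ i : Fin 3, ∑ j : Fin 3, ((Z i j).re ^ 2 + (Z i j).im ^ 2) := by
    rw [hB, hBtr]
    simp only [Matrix.trace, Matrix.diag_apply, Matrix.mul_apply, Complex.re_sum]
    refine Finset.sum_congr rfl fun i _ => Finset.sum_congr rfl fun j _ => ?_
    rw [hZsym i j, Complex.star_def, Complex.mul_conj]
    simp [Complex.normSq_apply]
    ring
  have hC' : C = ∑ i : Fin 3, ∑ j : Fin 3, ((Z i j).re ^ 2 - (Z i j).im ^ 2) := by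
    rw [hC, hCtr]
    simp only [Matrix.trace, Matrix.diag_apply, Matrix.mul_apply, Complex.re_sum]
    refine Finset.sum_congr rfl fun i _ => Finset.sum_congr rfl fun j _ => ?_
    rw [Matrix.map_apply, hZsym i j]
    simp [Complex.mul_re]
    ring
  have key : B - C = ∑ i : Fin 3, ∑ j : Fin 3, 2 * (Z i j).im ^ 2 := by
    rw [hB', hC', ← Finset.sum_sub_distrib]
    refine Finset.sum_congr rfl fun i _ => ?_
    rw [← Finset.sum_sub_distrib]
    exact Finset.sum_congr rfl fun j _ => by ring
  constructor
  · intro h i j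
    have hsum : ∑ i : Fin 3, ∑ j : Fin 3, 2 * (Z i j).im ^ 2 = 0 := by
      rw [← key]; linarith
    have h1 := (Finset.sum_eq_zero_iff_of_nonneg
      (fun i _ => Finset.sum_nonneg fun j _ => by positivity)).mp hsum i
      (Finset.mem_univ i)
    have h2 := (Finset.sum_eq_zero_iff_of_nonneg
      (fun j _ => by positivity)).mp h1 j (Finset.mem_univ j)
    have him : (Z i j).im = 0 := by nlinarith
    exact Complex.conj_eq_iff_im.mpr him
  · intro h
    have him : ∀ i j, (Z i j).im = 0 := fun i j => Complex.conj_eq_iff_im.mp (h i j)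
    have : B - C = 0 := by
      rw [key]
      simp [him]
    linarith
end

section
/- For any complex 3×3 matrix Δ, defining A = (tr(ΔΔ†))², B = tr((ΔΔ†)²) and C = tr(ΔΔᵀ(ΔΔᵀ)†), one has (2/3)A ≤ B + C. -/
open Matrix

set_option maxHeartbeats 4000000

/-- With `A = (tr(ΔΔ†))²`, `B = tr((ΔΔ†)²)`, `C = tr(ΔΔᵀ(ΔΔᵀ)†)`,
one has `(2/3) A ≤ B + C`. -/
theorem invariant_inequality_ABC (Δ : Matrix (Fin 3) (Fin 3) ℂ)
    (A B C : ℝ)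
    (hA : A = ((Δ * Δᴴ).trace).re ^ 2)
    (hB : B = ((Δ * Δᴴ * (Δ * Δᴴ)).trace).re)
    (hC : C = ((Δ * Δᵀ * (Δ * Δᵀ)ᴴ).trace).re) :
    2 / 3 * A ≤ B + C := by
  set x : Fin 3 → Fin 3 → ℝ := fun i j => (Δ i j).re with hxdef
  set y : Fin 3 → Fin 3 → ℝ := fun i j => (Δ i j).im with hydef
  set s : Fin 3 → Fin 3 → ℝ := fun i j =>
    x 0 i * x 0 j + y 0 i * y 0 j + (x 1 i * x 1 j + y 1 i * y 1 j)
      + (x 2 i * x 2 j + y 2 i * y 2 j) with hsdef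
  have key : B + C = 2/3 * A
      + 4 * (s 0 1 ^ 2 + s 0 2 ^ 2 + s 1 2 ^ 2)
      + 2/3 * ((s 0 0 - s 1 1) ^ 2 + (s 0 0 - s 2 2) ^ 2 + (s 1 1 - s 2 2) ^ 2) := by
    subst hA hB hC
    simp only [hsdef, hxdef, hydef, Matrix.trace, Matrix.diag, Matrix.mul_apply,
      Matrix.conjTranspose_apply, Matrix.transpose_apply, Fin.sum_univ_three,
      Complex.add_re, Complex.add_im, Complex.mul_re, Complex.mul_im,
      RCLike.star_def, Complex.conj_re, Complex.conj_im]
    ring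
  clear_value x y s
  linarith [sq_nonneg (s 0 1), sq_nonneg (s 0 2), sq_nonneg (s 1 2),
    sq_nonneg (s 0 0 - s 1 1), sq_nonneg (s 0 0 - s 2 2), sq_nonneg (s 1 1 - s 2 2)]
end

section
/- For a complex 3×3 matrix Δ, the equality B + C = (2/3)A (with A = (tr(ΔΔ†))², B = tr((ΔΔ†)²), C = tr(ΔΔᵀ(ΔΔᵀ)†)) holds if and only if the real symmetric part of Z = Δ†Δ is a scalar multiple of the identity matrix. -/
open Matrix

set_option maxHeartbeats 2000000 in
private lemma key_oblate (Δ : Matrix (Fin 3) (Fin 3) ℂ) :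
    3 * (((Δ * Δᴴ * (Δ * Δᴴ)).trace).re + ((Δ * Δᵀ * (Δ * Δᵀ)ᴴ).trace).re)
      - 2 * ((Δ * Δᴴ).trace).re ^ 2 =
    2 * ((((Δᴴ * Δ) 0 0).re - ((Δᴴ * Δ) 1 1).re) ^ 2
       + (((Δᴴ * Δ) 1 1).re - ((Δᴴ * Δ) 2 2).re) ^ 2
       + (((Δᴴ * Δ) 0 0).re - ((Δᴴ * Δ) 2 2).re) ^ 2)
    + 12 * (((Δᴴ * Δ) 0 1).re ^ 2 + ((Δᴴ * Δ) 0 2).re ^ 2 + ((Δᴴ * Δ) 1 2).re ^ 2) := by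
  simp only [Matrix.trace, Matrix.diag, Matrix.mul_apply, Matrix.conjTranspose_apply,
    Matrix.transpose_apply, Fin.sum_univ_three, Complex.add_re, Complex.mul_re,
    Complex.mul_im, Complex.add_im, RingHom.coe_coe, Complex.star_def,
    Complex.conj_re, Complex.conj_im]
  ring

set_option maxHeartbeats 2000000 in
/-- `B + C = (2/3) A` holds if and only if the real symmetric part of `Z = Δ†Δ`
is a scalar multiple of the identity. -/
theorem invariant_equality_oblate (Δ : Matrix (Fin 3) (Fin 3) ℂ)
    (A B C : ℝ)
    (hA : A = ((Δ * Δᴴ).trace).re ^ 2)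
    (hB : B = ((Δ * Δᴴ * (Δ * Δᴴ)).trace).re)
    (hC : C = ((Δ * Δᵀ * (Δ * Δᵀ)ᴴ).trace).re) :
    B + C = 2 / 3 * A ↔
      ∃ r : ℝ, ∀ i j : Fin 3, ((Δᴴ * Δ) i j).re = if i = j then r else 0 := by
  have hsym : ∀ i j : Fin 3, ((Δᴴ * Δ) j i).re = ((Δᴴ * Δ) i j).re := by
    intro i j
    have h := (Matrix.isHermitian_conjTranspose_mul_self Δ).apply i j
    rw [← h, Complex.star_def, Complex.conj_re]
  have key := key_oblate Δ
  constructor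
  · intro h
    have h0 : 3 * (B + C) - 2 * A = 0 := by rw [h]; ring
    rw [hB, hC, hA] at h0
    rw [h0] at key
    set s : Fin 3 → Fin 3 → ℝ := fun i j => ((Δᴴ * Δ) i j).re with hs
    have hz : 2 * ((s 0 0 - s 1 1) ^ 2 + (s 1 1 - s 2 2) ^ 2 + (s 0 0 - s 2 2) ^ 2)
        + 12 * (s 0 1 ^ 2 + s 0 2 ^ 2 + s 1 2 ^ 2) = 0 := key.symm
    have q1 : (s 0 0 - s 1 1) ^ 2 = 0 := by
      nlinarith [sq_nonneg (s 1 1 - s 2 2), sq_nonneg (s 0 0 - s 2 2), sq_nonneg (s 0 1), sq_nonneg (s 0 2), sq_nonneg (s 1 2), sq_nonneg (s 0 0 - s 1 1)]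
    have q2 : (s 1 1 - s 2 2) ^ 2 = 0 := by
      nlinarith [sq_nonneg (s 0 0 - s 1 1), sq_nonneg (s 0 0 - s 2 2), sq_nonneg (s 0 1), sq_nonneg (s 0 2), sq_nonneg (s 1 2), sq_nonneg (s 1 1 - s 2 2)]
    have q4 : s 0 1 ^ 2 = 0 := by
      nlinarith [sq_nonneg (s 0 0 - s 1 1), sq_nonneg (s 1 1 - s 2 2), sq_nonneg (s 0 0 - s 2 2), sq_nonneg (s 0 2), sq_nonneg (s 1 2), sq_nonneg (s 0 1)]
    have q5 : s 0 2 ^ 2 = 0 := by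
      nlinarith [sq_nonneg (s 0 0 - s 1 1), sq_nonneg (s 1 1 - s 2 2), sq_nonneg (s 0 0 - s 2 2), sq_nonneg (s 0 1), sq_nonneg (s 1 2), sq_nonneg (s 0 2)]
    have q6 : s 1 2 ^ 2 = 0 := by
      nlinarith [sq_nonneg (s 0 0 - s 1 1), sq_nonneg (s 1 1 - s 2 2), sq_nonneg (s 0 0 - s 2 2), sq_nonneg (s 0 1), sq_nonneg (s 0 2), sq_nonneg (s 1 2)]
    have e11 : s 0 0 - s 1 1 = 0 := by
      have := pow_eq_zero_iff (n := 2) two_ne_zero |>.mp q1; exact this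
    have e22 : s 1 1 - s 2 2 = 0 := pow_eq_zero_iff two_ne_zero |>.mp q2
    have e12 : s 0 1 = 0 := pow_eq_zero_iff two_ne_zero |>.mp q4
    have e13 : s 0 2 = 0 := pow_eq_zero_iff two_ne_zero |>.mp q5
    have e23 : s 1 2 = 0 := pow_eq_zero_iff two_ne_zero |>.mp q6
    refine ⟨s 0 0, fun i j => ?_⟩
    fin_cases i <;> fin_cases j <;> (clear_value s; subst hs; simp_all) <;> linarith [hsym 0 1, hsym 0 2, hsym 1 2]
  · rintro ⟨r, hr⟩
    have h00 := hr 0 0; have h11 := hr 1 1; have h22 := hr 2 2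
    have h01 := hr 0 1; have h02 := hr 0 2; have h12 := hr 1 2
    simp only [if_pos rfl] at h00 h11 h22
    rw [if_neg (by decide)] at h01
    rw [if_neg (by decide)] at h02
    rw [if_neg (by decide)] at h12
    rw [h00, h11, h22, h01, h02, h12] at key
    rw [hA, hB, hC]
    nlinarith [key]
end

section
/- Let Δ be a nonzero complex 3×3 matrix with A = (tr(ΔΔ†))², B = tr((ΔΔ†)²), C = tr(ΔΔᵀ(ΔΔᵀ)†). If C ≤ A/9, then √A ≤ √C + √(B − C). -/
set_option maxHeartbeats 1600000

open Matrix

theorem aux_tracePos (N : Matrix (Fin 3) (Fin 3) ℂ) : 0 ≤ ((Nᴴ * N).trace).re := by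
  have h : (Nᴴ * N).trace = ∑ j : Fin 3, ∑ i : Fin 3, (starRingEnd ℂ) (N i j) * N i j := by
    simp [Matrix.trace, Matrix.diag, Matrix.mul_apply, Matrix.conjTranspose_apply]
  rw [h, Complex.re_sum]
  apply Finset.sum_nonneg
  intro j _
  rw [Complex.re_sum]
  apply Finset.sum_nonneg
  intro i _
  rw [mul_comm, Complex.mul_conj]
  simp [Complex.ofReal_re]
  try exact Complex.normSq_nonneg _

theorem aux_cs6 (x1 x2 x3 x4 x5 x6 y1 y2 y3 y4 y5 y6 : ℝ) :
    (x1*y1+x2*y2+x3*y3+2*(x4*y4)+2*(x5*y5)+2*(x6*y6))^2 ≤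
    (x1^2+x2^2+x3^2+2*x4^2+2*x5^2+2*x6^2) * (y1^2+y2^2+y3^2+2*y4^2+2*y5^2+2*y6^2) := by
  nlinarith [sq_nonneg (x1*y2-x2*y1), sq_nonneg (x1*y3-x3*y1), sq_nonneg (x1*y4-x4*y1),
    sq_nonneg (x1*y5-x5*y1), sq_nonneg (x1*y6-x6*y1), sq_nonneg (x2*y3-x3*y2),
    sq_nonneg (x2*y4-x4*y2), sq_nonneg (x2*y5-x5*y2), sq_nonneg (x2*y6-x6*y2),
    sq_nonneg (x3*y4-x4*y3), sq_nonneg (x3*y5-x5*y3), sq_nonneg (x3*y6-x6*y3),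
    sq_nonneg (x4*y5-x5*y4), sq_nonneg (x4*y6-x6*y4), sq_nonneg (x5*y6-x6*y5)]


theorem aux_hst (t s w2 P : ℝ) (hP0 : 0 ≤ P) (hs0 : 0 ≤ s) (ht0 : 0 ≤ t)
    (hs2 : s^2 = w2) (h : P + t^2/3 - 2*w2 ≤ t^2/9) : t ≤ 3*s := by
  have ht9 : t^2 ≤ 9*w2 := by linarith
  nlinarith [ht9, hs2, hs0, ht0]

theorem aux_final (t s w2 P X KEYR : ℝ) (hs0 : 0 ≤ s) (ht0 : 0 ≤ t) (hP0 : 0 ≤ P)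
    (hw20 : 0 ≤ w2) (hs2 : s^2 = w2) (hsd : s = Real.sqrt w2)
    (hKEY : 2*s*w2^2 ≤ w2*KEYR) (hCS : X^2 ≤ P * ((2/3)*w2^2))
    (hKX : KEYR = (2/3)*w2*t - X) (hst : t ≤ 3*s)
    (h : P + t^2/3 - 2*w2 ≤ t^2/9) : 6*s^2 - 4*s*t + (2/3)*t^2 ≤ P := by
  rcases eq_or_lt_of_le hw20 with hw | hw
  · -- w2 = 0 : then s = 0 and from the hypothesis P = 0, t = 0
    have hs' : s = 0 := by rw [hsd, ← hw]; exact Real.sqrt_zero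
    rw [hs']
    nlinarith [hP0, ht0]
  · -- w2 > 0
    have h1 : 2*s*w2 - (2/3)*w2*t ≤ -X := by
      rw [hKX] at hKEY
      have e2 : 2*s*w2^2 = w2*(2*s*w2) := by ring
      rw [e2] at hKEY
      have h5 := (mul_le_mul_iff_right₀ hw).mp hKEY
      linarith
    have h2 : 0 ≤ 2*s*w2 - (2/3)*w2*t := by nlinarith [hst, hw20]
    have h3 : (2*s*w2 - (2/3)*w2*t)^2 ≤ X^2 := by nlinarith [h1, h2]
    have h4 : (2*s*w2 - (2/3)*w2*t)^2 ≤ P * ((2/3)*w2^2) := le_trans h3 hCS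
    have e3 : (2*s*w2 - (2/3)*w2*t)^2 = w2^2*((2*s-(2/3)*t)^2) := by ring
    have e4 : P * ((2/3)*w2^2) = w2^2*((2/3)*P) := by ring
    rw [e3, e4] at h4
    have h5 := (mul_le_mul_iff_right₀ (pow_pos hw 2)).mp h4
    nlinarith [h5]

theorem aux_endgame (t s C P w2 : ℝ) (ht0 : 0 ≤ t) (hs0 : 0 ≤ s) (hs2 : s^2 = w2)
    (hCP : C = P + t^2/3 - 2*w2) (hfinal : 6*s^2 - 4*s*t + (2/3)*t^2 ≤ P) :
    t ≤ Real.sqrt C + 2*s := by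
  rcases le_or_gt t (2*s) with hcase | hcase
  · have := Real.sqrt_nonneg C
    linarith
  · have hC2 : (t - 2*s)^2 ≤ C := by
      rw [hCP]
      nlinarith [hfinal, hs2]
    have hle : t - 2*s ≤ Real.sqrt C := by
      rw [show t - 2*s = Real.sqrt ((t-2*s)^2) from (Real.sqrt_sq (by linarith)).symm]
      exact Real.sqrt_le_sqrt hC2
    linarith

/-- If `C ≤ A/9` then `√A ≤ √C + √(B − C)` for a nonzero complex 3×3 matrix. -/
theorem invariant_inequality_epsilon (Δ : Matrix (Fin 3) (Fin 3) ℂ) (hΔ : Δ ≠ 0)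
    (A B C : ℝ)
    (hA : A = ((Δ * Δᴴ).trace).re ^ 2)
    (hB : B = ((Δ * Δᴴ * (Δ * Δᴴ)).trace).re)
    (hC : C = ((Δ * Δᵀ * (Δ * Δᵀ)ᴴ).trace).re)
    (h : C ≤ A / 9) :
    Real.sqrt A ≤ Real.sqrt C + Real.sqrt (B - C) := by
  set Z : Matrix (Fin 3) (Fin 3) ℂ := Δᴴ * Δ with hZ
  have hherm : Zᴴ = Z := by rw [hZ, conjTranspose_mul, conjTranspose_conjTranspose]
  have herm : ∀ i j, Z j i = (starRingEnd ℂ) (Z i j) := by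
    intro i j
    have := congrFun (congrFun hherm j) i
    simpa [conjTranspose_apply] using this.symm
  have him : ∀ i, (Z i i).im = 0 := by
    intro i; have := congrArg Complex.im (herm i i); simp at this; linarith
  obtain ⟨d1, hz00⟩ : ∃ x : ℝ, Z 0 0 = (x : ℂ) :=
    ⟨(Z 0 0).re, by apply Complex.ext <;> simp [him 0]⟩
  obtain ⟨d2, hz11⟩ : ∃ x : ℝ, Z 1 1 = (x : ℂ) :=
    ⟨(Z 1 1).re, by apply Complex.ext <;> simp [him 1]⟩
  obtain ⟨d3, hz22⟩ : ∃ x : ℝ, Z 2 2 = (x : ℂ) :=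
    ⟨(Z 2 2).re, by apply Complex.ext <;> simp [him 2]⟩
  obtain ⟨a1, b1, hz01⟩ : ∃ x y : ℝ, Z 0 1 = (x : ℂ) + (y:ℝ) * Complex.I :=
    ⟨(Z 0 1).re, (Z 0 1).im, by apply Complex.ext <;> simp⟩
  obtain ⟨a2, b2, hz02⟩ : ∃ x y : ℝ, Z 0 2 = (x : ℂ) + (y:ℝ) * Complex.I :=
    ⟨(Z 0 2).re, (Z 0 2).im, by apply Complex.ext <;> simp⟩
  obtain ⟨a3, b3, hz12⟩ : ∃ x y : ℝ, Z 1 2 = (x : ℂ) + (y:ℝ) * Complex.I :=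
    ⟨(Z 1 2).re, (Z 1 2).im, by apply Complex.ext <;> simp⟩
  have hz10 : Z 1 0 = (a1 : ℂ) - (b1:ℝ) * Complex.I := by
    rw [herm 0 1, hz01]; apply Complex.ext <;> simp
  have hz20 : Z 2 0 = (a2 : ℂ) - (b2:ℝ) * Complex.I := by
    rw [herm 0 2, hz02]; apply Complex.ext <;> simp
  have hz21 : Z 2 1 = (a3 : ℂ) - (b3:ℝ) * Complex.I := by
    rw [herm 1 2, hz12]; apply Complex.ext <;> simp
  -- the trace of Z
  obtain ⟨t, hT⟩ : ∃ x : ℝ, x = d1 + d2 + d3 := ⟨_, rfl⟩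
  have htr : Z.trace.re = t := by
    rw [Matrix.trace_fin_three, hz00, hz11, hz22, hT]; simp
  have ht0 : 0 ≤ t := by
    have h1 := aux_tracePos Δ
    rw [← hZ, htr] at h1
    exact h1
  -- A = t^2
  have hA' : A = t^2 := by
    rw [hA, Matrix.trace_mul_comm, ← hZ, htr]
  -- B
  have hBtr : (Δ * Δᴴ * (Δ * Δᴴ)).trace = (Z * Z).trace := by
    have e1 : Δ * Δᴴ * (Δ * Δᴴ) = (Δ * (Δᴴ * Δ)) * Δᴴ := by
      simp [Matrix.mul_assoc]
    rw [e1, Matrix.trace_mul_comm, hZ]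
    simp [Matrix.mul_assoc]
  have hB' : B = d1^2+d2^2+d3^2 + 2*(a1^2+b1^2+a2^2+b2^2+a3^2+b3^2) := by
    rw [hB, hBtr, Matrix.trace_fin_three]
    simp only [Matrix.mul_apply, Fin.sum_univ_three]
    rw [hz00, hz01, hz02, hz10, hz11, hz12, hz20, hz21, hz22]
    simp only [Complex.add_re, Complex.add_im, Complex.sub_re, Complex.sub_im,
      Complex.mul_re, Complex.mul_im, Complex.I_re, Complex.I_im, Complex.neg_re,
      Complex.neg_im, Complex.ofReal_re, Complex.ofReal_im]
    ring
  -- C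
  have hWent : ∀ i j, (Δᵀ * (Δᵀ)ᴴ) i j = (starRingEnd ℂ) (Z i j) := by
    intro i j
    simp [Matrix.mul_apply, conjTranspose_apply, transpose_apply, hZ, map_sum, mul_comm]
  have hCtr : (Δ * Δᵀ * (Δ * Δᵀ)ᴴ).trace = ((Δᵀ * (Δᵀ)ᴴ) * Z).trace := by
    rw [conjTranspose_mul]
    have e1 : Δ * Δᵀ * ((Δᵀ)ᴴ * Δᴴ) = Δ * (Δᵀ * ((Δᵀ)ᴴ * Δᴴ)) := by
      simp [Matrix.mul_assoc]
    rw [e1, Matrix.trace_mul_comm, hZ]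
    simp [Matrix.mul_assoc]
  have hC' : C = d1^2+d2^2+d3^2 + 2*(a1^2-b1^2+a2^2-b2^2+a3^2-b3^2) := by
    rw [hC, hCtr, Matrix.trace_fin_three]
    simp only [Matrix.mul_apply, Fin.sum_univ_three, hWent]
    rw [hz00, hz01, hz02, hz10, hz11, hz12, hz20, hz21, hz22]
    simp only [map_add, Complex.conj_ofReal, _root_.map_mul, Complex.conj_I, map_sub,
      Complex.add_re, Complex.add_im, Complex.sub_re, Complex.sub_im,
      Complex.mul_re, Complex.mul_im, Complex.I_re, Complex.I_im, Complex.neg_re,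
      Complex.neg_im, Complex.ofReal_re, Complex.ofReal_im]
    ring
  -- scalar abbreviations
  obtain ⟨w2, hw2⟩ : ∃ x : ℝ, x = b1^2+b2^2+b3^2 := ⟨_, rfl⟩
  have hw20 : 0 ≤ w2 := by rw [hw2]; positivity
  obtain ⟨s, hsd⟩ : ∃ x : ℝ, x = Real.sqrt w2 := ⟨_, rfl⟩
  have hs0 : 0 ≤ s := by rw [hsd]; exact Real.sqrt_nonneg _
  have hs2 : s^2 = w2 := by rw [hsd]; exact Real.sq_sqrt hw20
  obtain ⟨P, hPdef⟩ : ∃ x : ℝ,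
      x = (d1-t/3)^2+(d2-t/3)^2+(d3-t/3)^2+2*a1^2+2*a2^2+2*a3^2 := ⟨_, rfl⟩
  have hP0 : 0 ≤ P := by rw [hPdef]; positivity
  have hCP : C = P + t^2/3 - 2*w2 := by rw [hC', hPdef, hw2, hT]; ring
  have hBC : B - C = 4*w2 := by rw [hB', hC', hw2]; ring
  -- the key PSD inequality
  set M : Matrix (Fin 3) (Fin 3) ℂ :=
    !![((b1^2+b2^2 : ℝ) : ℂ), (b2*b3 : ℝ) - (s*b1 : ℝ)*Complex.I, -((b1*b3 : ℝ):ℂ) - (s*b2:ℝ)*Complex.I;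
       (b2*b3:ℝ) + (s*b1:ℝ)*Complex.I, ((b1^2+b3^2:ℝ):ℂ), (b1*b2:ℝ) - (s*b3:ℝ)*Complex.I;
       -((b1*b3:ℝ):ℂ) + (s*b2:ℝ)*Complex.I, (b1*b2:ℝ) + (s*b3:ℝ)*Complex.I, ((b2^2+b3^2:ℝ):ℂ)] with hM
  have hMH : Mᴴ = M := by
    ext i j
    fin_cases i <;> fin_cases j <;>
      simp [hM, conjTranspose_apply, Complex.ext_iff]
  obtain ⟨KEYR, hKEYR⟩ : ∃ x : ℝ, x = d1*(b1^2+b2^2) + d2*(b1^2+b3^2) + d3*(b2^2+b3^2)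
      + 2*a1*b2*b3 - 2*a2*b1*b3 + 2*a3*b1*b2 := ⟨_, rfl⟩
  have h0 : 0 ≤ ((Z * (Mᴴ * M)).trace).re := by
    have h1 := aux_tracePos (Δ * Mᴴ)
    have e1 : (Δ * Mᴴ)ᴴ * (Δ * Mᴴ) = M * ((Z * Mᴴ)) := by
      rw [conjTranspose_mul, conjTranspose_conjTranspose, hZ]
      simp [Matrix.mul_assoc]
    rw [e1, Matrix.trace_mul_comm] at h1
    simpa [Matrix.mul_assoc] using h1
  have hKEYid : ((Z * (Mᴴ * M)).trace).re = (w2 + s^2)*KEYR - 4*s*w2^2 := by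
    rw [hMH, Matrix.trace_fin_three]
    simp only [Matrix.mul_apply, Fin.sum_univ_three]
    rw [hz00, hz01, hz02, hz10, hz11, hz12, hz20, hz21, hz22]
    simp only [hM, Matrix.cons_val', Matrix.cons_val_zero, Matrix.cons_val_one,
      Matrix.head_cons, Matrix.empty_val', Matrix.cons_val_fin_one, Matrix.head_fin_const,
      Matrix.of_apply, Matrix.cons_val_two, Matrix.tail_cons]
    simp only [Complex.add_re, Complex.add_im, Complex.sub_re, Complex.sub_im,
      Complex.mul_re, Complex.mul_im, Complex.I_re, Complex.I_im, Complex.neg_re,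
      Complex.neg_im, Complex.ofReal_re, Complex.ofReal_im]
    rw [hKEYR, hw2]
    ring
  have hKEY : 2*s*w2^2 ≤ w2*KEYR := by
    rw [hKEYid, hs2] at h0
    linarith
  -- Cauchy-Schwarz step
  obtain ⟨X, hXdef⟩ : ∃ x : ℝ, x = (d1-t/3)*((2/3)*w2-b1^2-b2^2) + (d2-t/3)*((2/3)*w2-b1^2-b3^2)
      + (d3-t/3)*((2/3)*w2-b2^2-b3^2) + 2*(a1*(-(b2*b3))) + 2*(a2*(b1*b3)) + 2*(a3*(-(b1*b2))) :=
    ⟨_, rfl⟩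
  have hCS : X^2 ≤ P * ((2/3)*w2^2) := by
    have hcs := aux_cs6 (d1-t/3) (d2-t/3) (d3-t/3) a1 a2 a3
      ((2/3)*w2-b1^2-b2^2) ((2/3)*w2-b1^2-b3^2) ((2/3)*w2-b2^2-b3^2)
      (-(b2*b3)) (b1*b3) (-(b1*b2))
    rw [← hXdef, ← hPdef] at hcs
    have hY : ((2/3)*w2-b1^2-b2^2)^2 + ((2/3)*w2-b1^2-b3^2)^2 + ((2/3)*w2-b2^2-b3^2)^2
        + 2*(-(b2*b3))^2 + 2*(b1*b3)^2 + 2*(-(b1*b2))^2 = (2/3)*w2^2 := by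
      rw [hw2]; ring
    rw [hY] at hcs
    exact hcs
  have hKX : KEYR = (2/3)*w2*t - X := by
    rw [hKEYR, hXdef, hw2, hT]; ring
  -- from the hypothesis: t ≤ 3 s
  rw [hA', hCP] at h
  have hst : t ≤ 3*s := aux_hst t s w2 P hP0 hs0 ht0 hs2 h
  have hfinal : 6*s^2 - 4*s*t + (2/3)*t^2 ≤ P :=
    aux_final t s w2 P X KEYR hs0 ht0 hP0 hw20 hs2 hsd hKEY hCS hKX hst h
  -- endgame
  have hsqrtA : Real.sqrt A = t := by rw [hA']; exact Real.sqrt_sq ht0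
  have hsqrtBC : Real.sqrt (B - C) = 2*s := by
    have e : B - C = (2*s)^2 := by rw [hBC, ← hs2]; ring
    rw [e]; exact Real.sqrt_sq (by positivity)
  rw [hsqrtA, hsqrtBC]
  exact aux_endgame t s C P w2 ht0 hs0 hs2 hCP hfinal
end

section
/- Let d₂, d₃ be real with d₂ + d₃ > 0 and d₂ > d₃. Then for every nonzero complex 3×3 matrix Δ, with A, B, C as above, d₂B + d₃C ≥ (1/3)(d₂+d₃)A, and equality holds if and only if ΔΔ† is proportional to the identity and Δ†Δ is real. -/
open Matrix

private lemma unit_swap (M : Matrix (Fin 3) (Fin 3) ℂ) (c : ℂ) (hc : c ≠ 0)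
    (h : Mᴴ * M = c • (1 : Matrix (Fin 3) (Fin 3) ℂ)) :
    M * Mᴴ = c • (1 : Matrix (Fin 3) (Fin 3) ℂ) := by
  have hdet : IsUnit M.det := by
    have hd := congrArg Matrix.det h
    rw [Matrix.det_mul, Matrix.det_smul, Matrix.det_one] at hd
    simp only [Fintype.card_fin, mul_one] at hd
    refine isUnit_iff_ne_zero.mpr fun h0 => ?_
    rw [h0, mul_zero] at hd
    exact pow_ne_zero 3 hc hd.symm
  have hinv : M * M⁻¹ = 1 := Matrix.mul_nonsing_inv M hdet
  calc M * Mᴴ = M * Mᴴ * (M * M⁻¹) := by rw [hinv, mul_one]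
    _ = M * (Mᴴ * M) * M⁻¹ := by noncomm_ring
    _ = c • (M * M⁻¹) := by rw [h]; simp [Matrix.mul_smul, Matrix.smul_mul]
    _ = c • 1 := by rw [hinv]

private lemma trace_pos3 (Δ : Matrix (Fin 3) (Fin 3) ℂ) (hΔ : Δ ≠ 0) :
    0 < ((Δᴴ * Δ).trace).re := by
  have he : ((Δᴴ * Δ).trace).re = ∑ i : Fin 3, ∑ k : Fin 3, Complex.normSq (Δ k i) := by
    simp [Matrix.trace, Matrix.mul_apply, Matrix.diag, Complex.normSq_apply,
      Fin.sum_univ_three]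
  rw [he]
  obtain ⟨i, j, hij⟩ : ∃ i j, Δ i j ≠ 0 := by
    by_contra hcon
    push_neg at hcon
    exact hΔ (by ext i j; simp [hcon i j])
  refine Finset.sum_pos' (fun _ _ => Finset.sum_nonneg fun _ _ => Complex.normSq_nonneg _)
    ⟨j, Finset.mem_univ j, Finset.sum_pos'
      (fun _ _ => Complex.normSq_nonneg _)
      ⟨i, Finset.mem_univ i, Complex.normSq_pos.mpr hij⟩⟩

set_option maxHeartbeats 2000000 in
/-- For `d₂ + d₃ > 0`, `d₂ > d₃`: `d₂B + d₃C ≥ (1/3)(d₂+d₃)A`, with equality iff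
`ΔΔ†` is proportional to the identity and `Δ†Δ` is real (the CSL condition). -/
theorem quartic_bound_CSL (d₂ d₃ : ℝ) (h₁ : 0 < d₂ + d₃) (h₂ : d₃ < d₂)
    (Δ : Matrix (Fin 3) (Fin 3) ℂ) (hΔ : Δ ≠ 0)
    (A B C : ℝ)
    (hA : A = ((Δ * Δᴴ).trace).re ^ 2)
    (hB : B = ((Δ * Δᴴ * (Δ * Δᴴ)).trace).re)
    (hC : C = ((Δ * Δᵀ * (Δ * Δᵀ)ᴴ).trace).re) :
    d₂ * B + d₃ * C ≥ 1 / 3 * (d₂ + d₃) * A ∧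
    (d₂ * B + d₃ * C = 1 / 3 * (d₂ + d₃) * A ↔
      ((∃ c : ℂ, Δ * Δᴴ = c • (1 : Matrix (Fin 3) (Fin 3) ℂ)) ∧
        ∀ i j : Fin 3, star ((Δᴴ * Δ) i j) = (Δᴴ * Δ) i j)) := by
  set P := Δᴴ * Δ with hPdef
  have hPH : Pᴴ = P := by
    rw [hPdef, Matrix.conjTranspose_mul, Matrix.conjTranspose_conjTranspose]
  have herm : ∀ i j, star (P j i) = P i j := by
    intro i j
    rw [← Matrix.conjTranspose_apply, hPH]
  -- trace identities
  have tA : ((Δ * Δᴴ).trace) = P.trace := Matrix.trace_mul_comm Δ Δᴴ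
  have tB : (Δ * Δᴴ * (Δ * Δᴴ)).trace = (P * P).trace := by
    have h : Δ * Δᴴ * (Δ * Δᴴ) = (Δ * Δᴴ * Δ) * Δᴴ := by noncomm_ring
    rw [h, Matrix.trace_mul_comm, hPdef]
    congr 1
    noncomm_ring
  have tC : (Δ * Δᵀ * (Δ * Δᵀ)ᴴ).trace = (Pᵀ * P).trace := by
    have h3 : Δᴴᵀ = Δᵀᴴ := by
      ext i j
      simp [Matrix.conjTranspose_apply, Matrix.transpose_apply]
    have h2 : Pᵀ = Δᵀ * Δᵀᴴ := by
      rw [hPdef, Matrix.transpose_mul, h3]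
    rw [Matrix.conjTranspose_mul]
    have h : Δ * Δᵀ * (Δᵀᴴ * Δᴴ) = (Δ * (Δᵀ * Δᵀᴴ)) * Δᴴ := by noncomm_ring
    rw [h, Matrix.trace_mul_comm, Matrix.trace_mul_comm Pᵀ, h2, hPdef]
    congr 1
    noncomm_ring
  -- entry facts
  have e10 : P 1 0 = star (P 0 1) := by rw [← herm 0 1, star_star]
  have e20 : P 2 0 = star (P 0 2) := by rw [← herm 0 2, star_star]
  have e21 : P 2 1 = star (P 1 2) := by rw [← herm 1 2, star_star]
  have i00 : (P 0 0).im = 0 := by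
    have := congrArg Complex.im (herm 0 0); simp at this; linarith
  have i11 : (P 1 1).im = 0 := by
    have := congrArg Complex.im (herm 1 1); simp at this; linarith
  have i22 : (P 2 2).im = 0 := by
    have := congrArg Complex.im (herm 2 2); simp at this; linarith
  set a := (P 0 0).re with hadef
  set b := (P 1 1).re with hbdef
  set c3 := (P 2 2).re with hcdef
  set p := (P 0 1).re with hpdef
  set q := (P 0 2).re with hqdef
  set r := (P 1 2).re with hrdef
  set u := (P 0 1).im with hudef
  set v := (P 0 2).im with hvdef
  set w := (P 1 2).im with hwdef
  have hA' : A = (a + b + c3) ^ 2 := by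
    rw [hA, tA]
    simp [Matrix.trace, Fin.sum_univ_three]
    rfl
  have hB' : B = a^2 + b^2 + c3^2 + 2*(p^2 + u^2 + q^2 + v^2 + r^2 + w^2) := by
    rw [hB, tB]
    simp [Matrix.trace, Matrix.mul_apply, Fin.sum_univ_three, e10, e20, e21,
      Complex.add_re, Complex.mul_re, Complex.mul_im, i00, i11, i22,
      ← hadef, ← hbdef, ← hcdef, ← hpdef, ← hqdef, ← hrdef, ← hudef, ← hvdef, ← hwdef]
    ring
  have hC' : C = a^2 + b^2 + c3^2 + 2*(p^2 - u^2 + q^2 - v^2 + r^2 - w^2) := by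
    rw [hC, tC]
    simp [Matrix.trace, Matrix.mul_apply, Matrix.transpose_apply, Fin.sum_univ_three,
      e10, e20, e21, Complex.add_re, Complex.mul_re, Complex.mul_im, i00, i11, i22,
      ← hadef, ← hbdef, ← hcdef, ← hpdef, ← hqdef, ← hrdef, ← hudef, ← hvdef, ← hwdef]
    ring
  have hd : 0 < d₂ - d₃ := by linarith
  have n1 : 0 ≤ (d₂ + d₃) * ((a - b)^2 + (b - c3)^2 + (a - c3)^2) := by positivity
  have n2 : 0 ≤ 6 * (d₂ + d₃) * (p^2 + q^2 + r^2) := by positivity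
  have n3 : 0 ≤ 6 * (d₂ - d₃) * (u^2 + v^2 + w^2) := by positivity
  have hid : d₂ * (a^2 + b^2 + c3^2 + 2*(p^2 + u^2 + q^2 + v^2 + r^2 + w^2))
      + d₃ * (a^2 + b^2 + c3^2 + 2*(p^2 - u^2 + q^2 - v^2 + r^2 - w^2))
      - 1 / 3 * (d₂ + d₃) * ((a + b + c3) ^ 2)
      = 1/3 * ((d₂ + d₃) * ((a - b)^2 + (b - c3)^2 + (a - c3)^2))
        + 1/3 * (6 * (d₂ + d₃) * (p^2 + q^2 + r^2))
        + 1/3 * (6 * (d₂ - d₃) * (u^2 + v^2 + w^2)) := by ring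
  constructor
  · rw [ge_iff_le, hA', hB', hC']
    linarith
  constructor
  · intro heq
    rw [hA', hB', hC'] at heq
    have z1' : (d₂ + d₃) * ((a - b)^2 + (b - c3)^2 + (a - c3)^2) = 0 := by linarith
    have z2' : 6 * (d₂ + d₃) * (p^2 + q^2 + r^2) = 0 := by linarith
    have z3' : 6 * (d₂ - d₃) * (u^2 + v^2 + w^2) = 0 := by linarith
    have z1 : (a - b)^2 + (b - c3)^2 + (a - c3)^2 = 0 :=
      (mul_eq_zero.mp z1').resolve_left (ne_of_gt h₁)
    have z2 : p^2 + q^2 + r^2 = 0 :=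
      (mul_eq_zero.mp z2').resolve_left (by positivity)
    have z3 : u^2 + v^2 + w^2 = 0 :=
      (mul_eq_zero.mp z3').resolve_left (by positivity)
    have hab : a = b := by
      have : (a - b)^2 = 0 := by linarith [sq_nonneg (a-b), sq_nonneg (b-c3), sq_nonneg (a-c3)]
      have := sq_eq_zero_iff.mp this; linarith
    have hbc : b = c3 := by
      have : (b - c3)^2 = 0 := by linarith [sq_nonneg (a-b), sq_nonneg (b-c3), sq_nonneg (a-c3)]
      have := sq_eq_zero_iff.mp this; linarith
    have hp0 : p = 0 := by
      have : p^2 = 0 := by linarith [sq_nonneg p, sq_nonneg q, sq_nonneg r]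
      exact sq_eq_zero_iff.mp this
    have hq0 : q = 0 := by
      have : q^2 = 0 := by linarith [sq_nonneg p, sq_nonneg q, sq_nonneg r]
      exact sq_eq_zero_iff.mp this
    have hr0 : r = 0 := by
      have : r^2 = 0 := by linarith [sq_nonneg p, sq_nonneg q, sq_nonneg r]
      exact sq_eq_zero_iff.mp this
    have hu0 : u = 0 := by
      have : u^2 = 0 := by linarith [sq_nonneg u, sq_nonneg v, sq_nonneg w]
      exact sq_eq_zero_iff.mp this
    have hv0 : v = 0 := by
      have : v^2 = 0 := by linarith [sq_nonneg u, sq_nonneg v, sq_nonneg w]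
      exact sq_eq_zero_iff.mp this
    have hw0 : w = 0 := by
      have : w^2 = 0 := by linarith [sq_nonneg u, sq_nonneg v, sq_nonneg w]
      exact sq_eq_zero_iff.mp this
    -- the matrix P equals a • 1
    have hP00 : P 0 0 = (a : ℂ) := Complex.ext (by simp; rfl) (by simp [i00])
    have hP11 : P 1 1 = (a : ℂ) := Complex.ext (by rw [← hbdef]; exact hab.symm) (by simp [i11])
    have hP22 : P 2 2 = (a : ℂ) := Complex.ext (by rw [← hcdef, ← hbc]; exact hab.symm) (by simp [i22])
    have hP01 : P 0 1 = 0 := Complex.ext (by simp [← hpdef, hp0]) (by simp [← hudef, hu0])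
    have hP02 : P 0 2 = 0 := Complex.ext (by simp [← hqdef, hq0]) (by simp [← hvdef, hv0])
    have hP12 : P 1 2 = 0 := Complex.ext (by simp [← hrdef, hr0]) (by simp [← hwdef, hw0])
    have hPeq : P = (a : ℂ) • (1 : Matrix (Fin 3) (Fin 3) ℂ) := by
      ext i j
      fin_cases i <;> fin_cases j <;>
        simp [Matrix.one_apply, hP00, hP11, hP22, hP01, hP02, hP12, e10, e20, e21]
    have hapos : 0 < a := by
      have ht := trace_pos3 Δ hΔ
      rw [← hPdef] at ht
      have : (P.trace).re = a + b + c3 := by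
        simp [Matrix.trace, Fin.sum_univ_three]
        rfl
      rw [this] at ht
      linarith [hab, hbc]
    have hane : (a : ℂ) ≠ 0 := by
      simp only [ne_eq, Complex.ofReal_eq_zero]
      exact ne_of_gt hapos
    refine ⟨⟨(a : ℂ), unit_swap Δ (a : ℂ) hane (by rw [← hPdef, hPeq])⟩, ?_⟩
    intro i j
    rw [hPeq]
    by_cases hij : i = j <;>
      simp [Matrix.one_apply, hij]
  · rintro ⟨⟨μ, hμ⟩, -⟩
    have hμne : μ ≠ 0 := by
      intro h0
      rw [h0, zero_smul] at hμ
      have ht := trace_pos3 Δ hΔ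
      rw [← Matrix.trace_mul_comm, hμ] at ht
      simp at ht
    have hPeq : P = μ • (1 : Matrix (Fin 3) (Fin 3) ℂ) := by
      rw [hPdef]
      have h2 := unit_swap Δᴴ μ hμne (by rwa [Matrix.conjTranspose_conjTranspose])
      rwa [Matrix.conjTranspose_conjTranspose] at h2
    have ha : a = μ.re := by rw [hadef, hPeq]; simp
    have hb : b = μ.re := by rw [hbdef, hPeq]; simp
    have hc3 : c3 = μ.re := by rw [hcdef, hPeq]; simp
    have hp0 : p = 0 := by rw [hpdef, hPeq]; simp [Matrix.one_apply]
    have hq0 : q = 0 := by rw [hqdef, hPeq]; simp [Matrix.one_apply]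
    have hr0 : r = 0 := by rw [hrdef, hPeq]; simp [Matrix.one_apply]
    have hu0 : u = 0 := by rw [hudef, hPeq]; simp [Matrix.one_apply]
    have hv0 : v = 0 := by rw [hvdef, hPeq]; simp [Matrix.one_apply]
    have hw0 : w = 0 := by rw [hwdef, hPeq]; simp [Matrix.one_apply]
    rw [hA', hB', hC', ha, hb, hc3, hp0, hq0, hr0, hu0, hv0, hw0]
    ring
end

section
/- Let d₂, d₃ be real with d₂ + d₃ < 0 and d₃ < 0. Then for every complex 3×3 matrix Δ, with A, B, C defined as above, d₂B + d₃C ≥ (d₂+d₃)A. -/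
open Matrix

private lemma cs3 (a b : Fin 3 → ℂ) :
    Complex.normSq (∑ k, (starRingEnd ℂ) (a k) * b k) ≤
      (∑ k, Complex.normSq (a k)) * (∑ k, Complex.normSq (b k)) := by
  let u : EuclideanSpace ℂ (Fin 3) := WithLp.toLp 2 a
  let v : EuclideanSpace ℂ (Fin 3) := WithLp.toLp 2 b
  have h := norm_inner_le_norm (𝕜 := ℂ) u v
  have h2 : ‖(inner ℂ u v : ℂ)‖ ^ 2 ≤ ‖u‖ ^ 2 * ‖v‖ ^ 2 := by
    rw [← mul_pow]
    exact pow_le_pow_left₀ (norm_nonneg _) h 2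
  have hiu : (inner ℂ u v : ℂ) = ∑ k, (starRingEnd ℂ) (a k) * b k := by
    simp [PiLp.inner_apply, RCLike.inner_apply, u, v, mul_comm]
  rw [hiu, PiLp.norm_sq_eq_of_L2, PiLp.norm_sq_eq_of_L2] at h2
  simpa [Complex.normSq_eq_norm_sq, u, v] using h2

/-- For `d₂ + d₃ < 0` and `d₃ < 0`: `d₂B + d₃C ≥ (d₂+d₃)A`. -/
theorem quartic_bound_polar (d₂ d₃ : ℝ) (h₁ : d₂ + d₃ < 0) (h₂ : d₃ < 0)
    (Δ : Matrix (Fin 3) (Fin 3) ℂ)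
    (A B C : ℝ)
    (hA : A = ((Δ * Δᴴ).trace).re ^ 2)
    (hB : B = ((Δ * Δᴴ * (Δ * Δᴴ)).trace).re)
    (hC : C = ((Δ * Δᵀ * (Δ * Δᵀ)ᴴ).trace).re) :
    d₂ * B + d₃ * C ≥ (d₂ + d₃) * A := by
  -- the Gram matrix entries of the columns of Δ
  set z : Fin 3 → Fin 3 → ℂ := fun i j => ∑ k, (starRingEnd ℂ) (Δ k i) * Δ k j with hz
  have hzconj : ∀ i j, (starRingEnd ℂ) (z i j) = z j i := by
    intro i j
    simp only [hz, map_sum, _root_.map_mul, Complex.conj_conj]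
    exact Finset.sum_congr rfl fun k _ => mul_comm _ _
  -- trace identities
  have hzB : (Δ * Δᴴ * (Δ * Δᴴ)).trace = ∑ i, ∑ j, z i j * z j i := by
    simp only [hz, trace_fin_three, mul_apply, conjTranspose_apply,
      RCLike.star_def, Fin.sum_univ_three]
    ring
  have hzC : (Δ * Δᵀ * (Δ * Δᵀ)ᴴ).trace = ∑ i, ∑ j, z i j * z i j := by
    simp only [hz, trace_fin_three, mul_apply, conjTranspose_apply, transpose_apply,
      RCLike.star_def, map_add, _root_.map_mul, map_pow, Fin.sum_univ_three]
    ring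
  have hzA : (Δ * Δᴴ).trace = ∑ i, ∑ k, ((Complex.normSq (Δ k i) : ℝ) : ℂ) := by
    simp only [trace_fin_three, mul_apply, conjTranspose_apply, RCLike.star_def,
      Complex.mul_conj, Fin.sum_univ_three]
    ring
  -- real forms
  have hBr : B = ∑ i, ∑ j, Complex.normSq (z i j) := by
    rw [hB, hzB, Complex.re_sum]
    refine Finset.sum_congr rfl fun i _ => ?_
    rw [Complex.re_sum]
    refine Finset.sum_congr rfl fun j _ => ?_
    rw [← hzconj i j, Complex.mul_conj, Complex.ofReal_re]
  have hCr : C = ∑ i, ∑ j, ((z i j) * (z i j)).re := by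
    rw [hC, hzC, Complex.re_sum]
    exact Finset.sum_congr rfl fun i _ => Complex.re_sum _ _
  have hAr : A = (∑ i, ∑ k, Complex.normSq (Δ k i)) ^ 2 := by
    rw [hA, hzA]
    simp [Complex.re_sum]
  -- diagonal entries
  set d : Fin 3 → ℝ := fun i => ∑ k, Complex.normSq (Δ k i) with hd
  have hdnn : ∀ i, 0 ≤ d i := fun i => Finset.sum_nonneg fun k _ => Complex.normSq_nonneg _
  -- C ≤ B
  have hCB : C ≤ B := by
    rw [hBr, hCr]
    refine Finset.sum_le_sum fun i _ => Finset.sum_le_sum fun j _ => ?_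
    have h1 := sq_nonneg ((z i j).im)
    rw [Complex.mul_re, Complex.normSq_apply]
    nlinarith [sq_nonneg ((z i j).im)]
  -- B ≤ A
  have hBA : B ≤ A := by
    rw [hBr, hAr]
    have step : ∀ i j, Complex.normSq (z i j) ≤ d i * d j := fun i j =>
      cs3 (fun k => Δ k i) (fun k => Δ k j)
    calc ∑ i, ∑ j, Complex.normSq (z i j)
        ≤ ∑ i, ∑ j, d i * d j :=
          Finset.sum_le_sum fun i _ => Finset.sum_le_sum fun j _ => step i j
      _ = (∑ i, d i) ^ 2 := by rw [sq, Finset.sum_mul_sum]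
  -- conclude
  have k1 : (d₂ + d₃) * A ≤ (d₂ + d₃) * B := mul_le_mul_of_nonpos_left hBA h₁.le
  have k2 : d₃ * B ≤ d₃ * C := mul_le_mul_of_nonpos_left hCB h₂.le
  nlinarith [k1, k2]
end
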